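/- Error of local linearization of two-layer ReLU networks (Lemma 1): Assume d ≥ 3 and the random initialization of Assumption 1. Then there exists a constant C depending only on c and d such that for every random element W of (ℝ^d)^m that is measurable with respect to the initialization and satisfies W ∈ S_B almost surely, one has E_{init,X}[ |f(X; W) − f̂(X; W)|² ] ≤ C B³ m^{−1/2} and E_{init,X}[ ‖∇_W f(X; W) − ∇_W f(X; W(0))‖² ] ≤ C B m^{−1/2}. -/

import Mathlib

noncomputable section

open MeasureTheory ProbabilityTheory Finset

/-- Euclidean space of inputs. -/
abbrev Vec (d : ℕ) := EuclideanSpace ℝ (Fin d)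

/-- Weight space of a width-`m` two-layer network (ℓ² norm of the concatenation). -/
abbrev Wt (m d : ℕ) := EuclideanSpace ℝ (Fin m × Fin d)

/-- Preactivation `W_rᵀ x` of neuron `r`. -/
def npre {m d : ℕ} (W : Wt m d) (x : Vec d) (r : Fin m) : ℝ := ∑ i, W (r, i) * x i

/-- Two-layer ReLU network `f(x; W) = m^{-1/2} Σ_r s_r max(W_rᵀ x, 0)`. -/
def net {m d : ℕ} (s : Fin m → ℝ) (W : Wt m d) (x : Vec d) : ℝ :=
  (Real.sqrt m)⁻¹ * ∑ r, s r * max (npre W x r) 0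

/-- Formal gradient of the network: block `r` is `m^{-1/2} s_r 1{W_rᵀ x > 0} x`. -/
def netGrad {m d : ℕ} (s : Fin m → ℝ) (W : Wt m d) (x : Vec d) : Wt m d :=
  WithLp.toLp 2 (fun p => (Real.sqrt m)⁻¹ * s p.1 * (if 0 < npre W x p.1 then x p.2 else 0))

/-- Linearization at `W(0)`: `f̂(x;W) = f(x;W(0)) + ⟨∇_W f(x;W(0)), W − W(0)⟩`. -/
def netLin {m d : ℕ} (s : Fin m → ℝ) (W0 W : Wt m d) (x : Vec d) : ℝ :=
  net s W0 x + ∑ p : Fin m × Fin d, netGrad s W0 x p * (W p - W0 p)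

open scoped ENNReal NNReal

namespace Stmt2Aux

/-- scalar linearization error bound -/
lemma relu_lin_err {a δ t : ℝ} (h : |δ| ≤ t) :
    |max (a + δ) 0 - max a 0 - (if 0 < a then δ else 0)| ≤
      t * (if |a| ≤ t then 1 else 0) := by
  have hδ1 : δ ≤ t := le_trans (le_abs_self δ) h
  have hδ2 : -t ≤ δ := by
    have := neg_abs_le δ; linarith
  by_cases ha : 0 < a <;> by_cases hb : 0 < a + δ
  · rw [if_pos ha, max_eq_left hb.le, max_eq_left ha.le]
    simp only [abs_le]
    constructor <;> [skip; skip] <;> split_ifs <;> nlinarith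
  · have h1 : |a| ≤ t := by
      rw [abs_of_pos ha]; push_neg at hb; linarith
    rw [if_pos ha, if_pos h1, max_eq_left ha.le, max_eq_right (by push_neg at hb; linarith)]
    rw [abs_le]; push_neg at hb; constructor <;> nlinarith
  · have h1 : |a| ≤ t := by
      push_neg at ha
      rw [abs_of_nonpos ha]; nlinarith
    rw [if_neg ha, if_pos h1, max_eq_left hb.le, max_eq_right (by push_neg at ha; linarith)]
    rw [abs_le]; push_neg at ha; constructor <;> nlinarith
  · rw [if_neg ha, max_eq_right, max_eq_right] <;> push_neg at ha hb <;>
      [skip; linarith; linarith]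
    have ht : 0 ≤ t := (abs_nonneg δ).trans h
    simp only [sub_zero, sub_self, abs_zero]
    split_ifs <;> nlinarith

/-- indicator difference squared bound -/
lemma ind_diff_sq {a δ t : ℝ} (h : |δ| ≤ t) :
    ((if 0 < a + δ then (1:ℝ) else 0) - (if 0 < a then (1:ℝ) else 0))^2
      ≤ (if |a| ≤ t then (1:ℝ) else 0) := by
  have hδ1 : δ ≤ t := le_trans (le_abs_self δ) h
  have hδ2 : -t ≤ δ := by have := neg_abs_le δ; linarith
  by_cases ha : 0 < a <;> by_cases hb : 0 < a + δ
  · simp [ha, hb]; split_ifs <;> norm_num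
  · push_neg at hb
    have h1 : |a| ≤ t := by rw [abs_of_pos ha]; linarith
    simp [ha, hb.not_gt, h1]
  · push_neg at ha
    have h1 : |a| ≤ t := by rw [abs_of_nonpos ha]; linarith
    simp [ha.not_gt, hb, h1]
  · simp [ha, hb]; split_ifs <;> norm_num

def Trow {m d : ℕ} (W0 W : Wt m d) (r : Fin m) : ℝ :=
  Real.sqrt (∑ i, (W (r, i) - W0 (r, i)) ^ 2)

lemma Trow_nonneg {m d : ℕ} (W0 W : Wt m d) (r : Fin m) : 0 ≤ Trow W0 W r :=
  Real.sqrt_nonneg _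

def chiR {m d : ℕ} (W0 W : Wt m d) (x : Vec d) (r : Fin m) : ℝ :=
  if |npre W0 x r| ≤ Trow W0 W r then 1 else 0

lemma chiR_nonneg {m d : ℕ} (W0 W : Wt m d) (x : Vec d) (r : Fin m) :
    0 ≤ chiR W0 W x r := by unfold chiR; split_ifs <;> norm_num

lemma sum_sq_x_le {d : ℕ} {x : Vec d} (hx : ‖x‖ ≤ 1) : ∑ i, (x i)^2 ≤ 1 := by
  have h := EuclideanSpace.norm_eq x
  have h2 : Real.sqrt (∑ i, ‖x i‖^2) ≤ 1 := h ▸ hx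
  have h3 : ∑ i, ‖x i‖^2 ≤ 1 := by
    nlinarith [Real.sq_sqrt (by positivity : (0:ℝ) ≤ ∑ i, ‖x i‖^2),
      Real.sqrt_nonneg (∑ i, ‖x i‖^2)]
  simpa [Real.norm_eq_abs, sq_abs] using h3

lemma delta_le {m d : ℕ} (W0 W : Wt m d) {x : Vec d} (hx : ‖x‖ ≤ 1) (r : Fin m) :
    |∑ i, (W (r, i) - W0 (r, i)) * x i| ≤ Trow W0 W r := by
  have hcs := Finset.sum_mul_sq_le_sq_mul_sq Finset.univ
    (fun i => W (r, i) - W0 (r, i)) (fun i => x i)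
  have hx2 := sum_sq_x_le hx
  have h1 : (∑ i, (W (r, i) - W0 (r, i)) * x i)^2 ≤ ∑ i, (W (r, i) - W0 (r, i))^2 := by
    calc (∑ i, (W (r, i) - W0 (r, i)) * x i)^2
        ≤ (∑ i, (W (r, i) - W0 (r, i))^2) * ∑ i, (x i)^2 := hcs
      _ ≤ (∑ i, (W (r, i) - W0 (r, i))^2) * 1 := by
          apply mul_le_mul_of_nonneg_left hx2; positivity
      _ = _ := mul_one _
  rw [← Real.sqrt_sq_eq_abs]
  exact Real.sqrt_le_sqrt h1

lemma sum_Trow_sq {m d : ℕ} (W0 W : Wt m d) :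
    ∑ r, (Trow W0 W r)^2 = ‖W - W0‖^2 := by
  have h : ∀ r, (Trow W0 W r)^2 = ∑ i, (W (r, i) - W0 (r, i)) ^ 2 := fun r =>
    Real.sq_sqrt (by positivity)
  simp_rw [h]
  rw [EuclideanSpace.norm_eq, Real.sq_sqrt (by positivity), Fintype.sum_prod_type]
  apply Finset.sum_congr rfl; intro r _
  apply Finset.sum_congr rfl; intro i _
  simp [PiLp.sub_apply, Real.norm_eq_abs, sq_abs]


lemma key1 {m d : ℕ} {s : Fin m → ℝ} (hs : ∀ r, s r = 1 ∨ s r = -1)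
    (W0 W : Wt m d) {x : Vec d} (hx : ‖x‖ ≤ 1) {B : ℝ} (hB0 : 0 ≤ B) (hB : ‖W - W0‖ ≤ B) :
    (net s W x - netLin s W0 W x) ^ 2 ≤ (m:ℝ)⁻¹ * B^2 * ∑ r, chiR W0 W x r := by
  have habs : ∀ r, |s r| = 1 := by intro r; rcases hs r with h | h <;> simp [h]
  set a : Fin m → ℝ := npre W0 x with ha
  set δ : Fin m → ℝ := fun r => ∑ i, (W (r,i) - W0 (r,i)) * x i with hδ
  have hb : ∀ r, npre W x r = a r + δ r := by
    intro r; simp only [ha, hδ, npre]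
    rw [← Finset.sum_add_distrib]
    exact Finset.sum_congr rfl fun i _ => by ring
  have hrow : ∀ r : Fin m, ∑ i, netGrad s W0 x (r, i) * (W (r,i) - W0 (r,i))
      = (Real.sqrt m)⁻¹ * (s r * (if 0 < a r then δ r else 0)) := by
    intro r
    simp only [netGrad, PiLp.toLp_apply, ← ha]
    by_cases h : 0 < a r
    · simp only [if_pos h, hδ, Finset.mul_sum]
      exact Finset.sum_congr rfl fun i _ => by ring
    · simp only [if_neg h, mul_zero, zero_mul, Finset.sum_const_zero]
  have hdiff : net s W x - netLin s W0 W x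
      = (Real.sqrt m)⁻¹ * ∑ r, s r *
          (max (a r + δ r) 0 - max (a r) 0 - (if 0 < a r then δ r else 0)) := by
    unfold netLin net
    rw [Fintype.sum_prod_type]
    simp_rw [hrow, hb]
    have hsplit : ∀ r : Fin m, s r * (max (a r + δ r) 0 - max (a r) 0 - (if 0 < a r then δ r else 0))
        = s r * max (a r + δ r) 0 - s r * max (a r) 0 - s r * (if 0 < a r then δ r else 0) :=
      fun r => by ring
    simp_rw [hsplit, Finset.sum_sub_distrib, ← Finset.mul_sum]
    ring
  have hstep : |net s W x - netLin s W0 W x|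
      ≤ (Real.sqrt m)⁻¹ * ∑ r, Trow W0 W r * chiR W0 W x r := by
    rw [hdiff, abs_mul, abs_inv, abs_of_nonneg (Real.sqrt_nonneg _)]
    apply mul_le_mul_of_nonneg_left _ (by positivity)
    calc |∑ r, s r * (max (a r + δ r) 0 - max (a r) 0 - (if 0 < a r then δ r else 0))|
        ≤ ∑ r, |s r * (max (a r + δ r) 0 - max (a r) 0 - (if 0 < a r then δ r else 0))| :=
          Finset.abs_sum_le_sum_abs _ _
      _ ≤ ∑ r, Trow W0 W r * chiR W0 W x r := by
          apply Finset.sum_le_sum; intro r _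
          rw [abs_mul, habs r, one_mul]
          have hd : |δ r| ≤ Trow W0 W r := by
            simpa [hδ] using delta_le W0 W hx r
          simpa [chiR, ← ha] using relu_lin_err hd
  have h2 : (net s W x - netLin s W0 W x)^2
      ≤ ((Real.sqrt m)⁻¹ * ∑ r, Trow W0 W r * chiR W0 W x r)^2 := by
    rw [← sq_abs (net s W x - netLin s W0 W x)]
    exact pow_le_pow_left₀ (abs_nonneg _) hstep 2
  refine h2.trans ?_
  rw [mul_pow]
  have hq : ((Real.sqrt m)⁻¹)^2 = (m:ℝ)⁻¹ := by
    rw [inv_pow, Real.sq_sqrt (Nat.cast_nonneg m)]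
  rw [hq, mul_assoc]
  apply mul_le_mul_of_nonneg_left _ (by positivity)
  calc (∑ r, Trow W0 W r * chiR W0 W x r)^2
      ≤ (∑ r, (Trow W0 W r)^2) * (∑ r, (chiR W0 W x r)^2) :=
        Finset.sum_mul_sq_le_sq_mul_sq _ _ _
    _ ≤ B^2 * ∑ r, chiR W0 W x r := by
        have h3 : ∑ r, (chiR W0 W x r)^2 = ∑ r, chiR W0 W x r := by
          apply Finset.sum_congr rfl; intro r _; unfold chiR; split_ifs <;> norm_num
        rw [h3, sum_Trow_sq]
        apply mul_le_mul_of_nonneg_right _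
          (Finset.sum_nonneg fun r _ => chiR_nonneg W0 W x r)
        nlinarith [norm_nonneg (W - W0)]

lemma key2 {m d : ℕ} {s : Fin m → ℝ} (hs : ∀ r, s r = 1 ∨ s r = -1)
    (W0 W : Wt m d) {x : Vec d} (hx : ‖x‖ ≤ 1) :
    ∑ p : Fin m × Fin d, (netGrad s W x p - netGrad s W0 x p)^2
      ≤ (m:ℝ)⁻¹ * ∑ r, chiR W0 W x r := by
  have hsq : ∀ r, (s r)^2 = 1 := by intro r; rcases hs r with h | h <;> simp [h]
  rw [Fintype.sum_prod_type, Finset.mul_sum]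
  apply Finset.sum_le_sum
  intro r _
  have hsum : ∀ i : Fin d, (netGrad s W x (r,i) - netGrad s W0 x (r,i))^2
      = ((Real.sqrt m)⁻¹)^2 * ((s r)^2 *
        ((((if 0 < npre W x r then (1:ℝ) else 0) - (if 0 < npre W0 x r then 1 else 0))^2) * (x i)^2)) := by
    intro i; simp only [netGrad, PiLp.toLp_apply]
    by_cases h1 : 0 < npre W x r <;> by_cases h2 : 0 < npre W0 x r <;>
      simp only [if_pos, if_neg, h1, h2, if_true, if_false] <;> ring
  simp_rw [hsum]
  rw [← Finset.mul_sum, ← Finset.mul_sum, ← Finset.mul_sum]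
  have hq : ((Real.sqrt m)⁻¹)^2 = (m:ℝ)⁻¹ := by
    rw [inv_pow, Real.sq_sqrt (Nat.cast_nonneg m)]
  rw [hq, hsq]
  have he : (((if 0 < npre W x r then (1:ℝ) else 0) - (if 0 < npre W0 x r then 1 else 0))^2)
      ≤ chiR W0 W x r := by
    have hd : |∑ i, (W (r,i) - W0 (r,i)) * x i| ≤ Trow W0 W r := delta_le W0 W hx r
    have hb : npre W x r = npre W0 x r + ∑ i, (W (r,i) - W0 (r,i)) * x i := by
      unfold npre; rw [← Finset.sum_add_distrib]
      exact Finset.sum_congr rfl fun i _ => by ring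
    rw [hb]
    simpa [chiR] using ind_diff_sq hd
  have hx2 : ∑ i, (x i)^2 ≤ 1 := sum_sq_x_le hx
  have he0 : (0:ℝ) ≤ (((if 0 < npre W x r then (1:ℝ) else 0) - (if 0 < npre W0 x r then 1 else 0))^2) := sq_nonneg _
  have hc0 : (0:ℝ) ≤ chiR W0 W x r := chiR_nonneg W0 W x r
  have hxs0 : (0:ℝ) ≤ ∑ i, (x i)^2 := by positivity
  have hmi : (0:ℝ) ≤ (m:ℝ)⁻¹ := by positivity
  calc (m:ℝ)⁻¹ * (1 * ((((if 0 < npre W x r then (1:ℝ) else 0) - (if 0 < npre W0 x r then 1 else 0))^2) * ∑ i, (x i)^2))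
      ≤ (m:ℝ)⁻¹ * (1 * (chiR W0 W x r * 1)) := by
        apply mul_le_mul_of_nonneg_left _ hmi
        rw [one_mul, one_mul]
        exact mul_le_mul he hx2 hxs0 hc0
    _ = (m:ℝ)⁻¹ * chiR W0 W x r := by ring

lemma meas_null {α : Type*} [MeasurableSpace α] (μ : Measure α) [IsFiniteMeasure μ] (S : Set α)
    {c : ℝ} (hc : 0 < c) (h : ∀ ζ : ℝ, 0 < ζ → μ S ≤ ENNReal.ofReal (c * ζ)) : μ S = 0 := by
  refine le_antisymm ?_ zero_le
  refine ENNReal.le_of_forall_pos_le_add fun ε hε _ => ?_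
  rw [zero_add]
  have hε' : (0:ℝ) < (ε:ℝ) := hε
  calc μ S ≤ ENNReal.ofReal (c * ((ε:ℝ) / c)) := h _ (by positivity)
    _ = ENNReal.ofReal (ε:ℝ) := by rw [mul_div_cancel₀ _ hc.ne']
    _ = (ε : ENNReal) := ENNReal.ofReal_coe_nnreal

lemma amgm3 {x y z S : ℝ} (hx : x ≠ 0) (hy : y ≠ 0) (hz : z ≠ 0)
    (hS : x^2 + y^2 + z^2 ≤ S) :
    S⁻¹ ≤ 3⁻¹ * (|x| ^ (-(2:ℝ)/3) * (|y| ^ (-(2:ℝ)/3) * |z| ^ (-(2:ℝ)/3))) := by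
  have h23 : ∀ w : ℝ, |w| ^ ((2:ℝ)/3) = (w^2) ^ ((1:ℝ)/3) := by
    intro w
    calc |w| ^ ((2:ℝ)/3) = |w| ^ ((2:ℝ) * (1/3)) := by norm_num
      _ = (|w| ^ (2:ℝ)) ^ ((1:ℝ)/3) := Real.rpow_mul (abs_nonneg w) _ _
      _ = (w^2) ^ ((1:ℝ)/3) := by
          rw [show |w| ^ (2:ℝ) = |w| ^ (2:ℕ) from Real.rpow_natCast _ 2, sq_abs]
  have hgm := Real.geom_mean_le_arith_mean3_weighted (by norm_num : (0:ℝ) ≤ 1/3)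
    (by norm_num : (0:ℝ) ≤ 1/3) (by norm_num : (0:ℝ) ≤ 1/3)
    (sq_nonneg x) (sq_nonneg y) (sq_nonneg z) (by norm_num)
  have hxa : 0 < |x| := abs_pos.mpr hx
  have hya : 0 < |y| := abs_pos.mpr hy
  have hza : 0 < |z| := abs_pos.mpr hz
  have hPx : 0 < |x| ^ ((2:ℝ)/3) := Real.rpow_pos_of_pos hxa _
  have hPy : 0 < |y| ^ ((2:ℝ)/3) := Real.rpow_pos_of_pos hya _
  have hPz : 0 < |z| ^ ((2:ℝ)/3) := Real.rpow_pos_of_pos hza _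
  have hP : 0 < |x| ^ ((2:ℝ)/3) * (|y| ^ ((2:ℝ)/3) * |z| ^ ((2:ℝ)/3)) := by positivity
  have hgm' : 3 * (|x| ^ ((2:ℝ)/3) * (|y| ^ ((2:ℝ)/3) * |z| ^ ((2:ℝ)/3))) ≤ S := by
    have := hgm
    rw [← h23 x, ← h23 y, ← h23 z] at this
    nlinarith [this]
  have hstep : S⁻¹ ≤ (3 * (|x| ^ ((2:ℝ)/3) * (|y| ^ ((2:ℝ)/3) * |z| ^ ((2:ℝ)/3))))⁻¹ := by
    apply inv_anti₀ (by positivity) hgm'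
  refine hstep.trans_eq ?_
  rw [mul_inv, mul_inv, mul_inv]
  rw [← Real.rpow_neg (abs_nonneg x), ← Real.rpow_neg (abs_nonneg y),
    ← Real.rpow_neg (abs_nonneg z)]
  norm_num

lemma gauss_rpow_moment {d : ℕ} (hd : 3 ≤ d) :
    ∫⁻ u, ENNReal.ofReal (|u| ^ (-(2:ℝ)/3)) ∂(gaussianReal 0 ((d : NNReal))⁻¹)
      ≤ ENNReal.ofReal (6 * Real.sqrt d + 1) := by
  have hdn : (d:NNReal) ≠ 0 := Nat.cast_ne_zero.mpr (by omega)
  have hv : ((d:NNReal))⁻¹ ≠ 0 := by simp [hdn]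
  have hd0 : (0:ℝ) < d := by exact_mod_cast Nat.pos_of_ne_zero (by omega)
  have hφm : Measurable (fun u : ℝ => ENNReal.ofReal (|u| ^ (-(2:ℝ)/3))) := by
    measurability
  rw [gaussianReal_of_var_ne_zero 0 hv,
    lintegral_withDensity_eq_lintegral_mul _ (measurable_gaussianPDF 0 _) hφm]
  rw [← lintegral_add_compl _ (measurableSet_Icc (a := (-1:ℝ)) (b := 1))]
  have hcompl : ∫⁻ u in (Set.Icc (-1:ℝ) 1)ᶜ,
      (gaussianPDF 0 ((d:NNReal))⁻¹ * fun u => ENNReal.ofReal (|u| ^ (-(2:ℝ)/3))) u ∂volume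
        ≤ 1 := by
    have hmono : ∀ u ∈ (Set.Icc (-1:ℝ) 1)ᶜ,
        (gaussianPDF 0 ((d:NNReal))⁻¹ * fun u => ENNReal.ofReal (|u| ^ (-(2:ℝ)/3))) u
          ≤ gaussianPDF 0 ((d:NNReal))⁻¹ u := by
      intro u hu
      simp only [Set.mem_compl_iff, Set.mem_Icc, not_and_or, not_le] at hu
      have h1 : 1 ≤ |u| := by
        rcases hu with h | h
        · rw [abs_of_nonpos (by linarith)]; linarith
        · rw [abs_of_pos (by linarith)]; linarith
      have h2 : |u| ^ (-(2:ℝ)/3) ≤ 1 :=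
        Real.rpow_le_one_of_one_le_of_nonpos h1 (by norm_num)
      have h2' : ENNReal.ofReal (|u| ^ (-(2:ℝ)/3)) ≤ 1 := by
        rw [← ENNReal.ofReal_one]; exact ENNReal.ofReal_le_ofReal h2
      calc (gaussianPDF 0 ((d:NNReal))⁻¹ * fun u => ENNReal.ofReal (|u| ^ (-(2:ℝ)/3))) u
          = gaussianPDF 0 ((d:NNReal))⁻¹ u * ENNReal.ofReal (|u| ^ (-(2:ℝ)/3)) := rfl
        _ ≤ gaussianPDF 0 ((d:NNReal))⁻¹ u * 1 := mul_le_mul_right h2' _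
        _ = gaussianPDF 0 ((d:NNReal))⁻¹ u := mul_one _
    calc ∫⁻ u in (Set.Icc (-1:ℝ) 1)ᶜ,
        (gaussianPDF 0 ((d:NNReal))⁻¹ * fun u => ENNReal.ofReal (|u| ^ (-(2:ℝ)/3))) u ∂volume
        ≤ ∫⁻ u in (Set.Icc (-1:ℝ) 1)ᶜ, gaussianPDF 0 ((d:NNReal))⁻¹ u ∂volume :=
          setLIntegral_mono (measurable_gaussianPDF 0 _) hmono
      _ ≤ ∫⁻ u, gaussianPDF 0 ((d:NNReal))⁻¹ u ∂volume := setLIntegral_le_lintegral _ _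
      _ = 1 := lintegral_gaussianPDF_eq_one 0 hv
  have hIcc01 : ∫⁻ u in Set.Icc (0:ℝ) 1, ENNReal.ofReal (|u| ^ (-(2:ℝ)/3)) ∂volume
      = ENNReal.ofReal 3 := by
    have h1 : IntervalIntegrable (fun u : ℝ => u ^ (-(2:ℝ)/3)) volume 0 1 :=
      intervalIntegral.intervalIntegrable_rpow' (by norm_num)
    have h2 : IntegrableOn (fun u : ℝ => u ^ (-(2:ℝ)/3)) (Set.Ioc (0:ℝ) 1) volume := by
      have := (intervalIntegrable_iff (μ := volume)).mp h1
      rwa [Set.uIoc_of_le (by norm_num : (0:ℝ) ≤ 1)] at this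
    have hint : IntegrableOn (fun u : ℝ => |u| ^ (-(2:ℝ)/3)) (Set.Icc (0:ℝ) 1) volume := by
      rw [integrableOn_Icc_iff_integrableOn_Ioc]
      apply h2.congr
      filter_upwards [ae_restrict_mem measurableSet_Ioc] with u hu
      rw [abs_of_pos hu.1]
    have hval : ∫ u in Set.Icc (0:ℝ) 1, |u| ^ (-(2:ℝ)/3) ∂volume = 3 := by
      rw [MeasureTheory.integral_Icc_eq_integral_Ioc]
      rw [setIntegral_congr_fun measurableSet_Ioc
        (fun u hu => by rw [abs_of_pos hu.1] :
          ∀ u ∈ Set.Ioc (0:ℝ) 1, |u| ^ (-(2:ℝ)/3) = u ^ (-(2:ℝ)/3))]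
      rw [← intervalIntegral.integral_of_le (by norm_num : (0:ℝ) ≤ 1)]
      rw [integral_rpow (Or.inl (by norm_num))]
      rw [Real.one_rpow, Real.zero_rpow (by norm_num)]
      norm_num
    rw [← ofReal_integral_eq_lintegral_ofReal hint ?_, hval]
    filter_upwards with u using by positivity
  have hIccneg : ∫⁻ u in Set.Icc (-1:ℝ) 0, ENNReal.ofReal (|u| ^ (-(2:ℝ)/3)) ∂volume
      = ∫⁻ u in Set.Icc (0:ℝ) 1, ENNReal.ofReal (|u| ^ (-(2:ℝ)/3)) ∂volume := by
    rw [← lintegral_indicator measurableSet_Icc, ← lintegral_indicator measurableSet_Icc]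
    have hmp : MeasurePreserving (fun u : ℝ => -u) volume volume :=
      Measure.measurePreserving_neg _
    rw [← hmp.lintegral_comp (hφm.indicator measurableSet_Icc)]
    apply lintegral_congr
    intro u
    simp only [Set.indicator_apply, Set.mem_Icc, abs_neg]
    by_cases h : 0 ≤ u ∧ u ≤ 1
    · rw [if_pos ⟨by linarith [h.2], by linarith [h.1]⟩, if_pos h]
    · rw [if_neg (by intro h2; exact h ⟨by linarith [h2.2], by linarith [h2.1]⟩), if_neg h]
  have hφIcc : ∫⁻ u in Set.Icc (-1:ℝ) 1, ENNReal.ofReal (|u| ^ (-(2:ℝ)/3)) ∂volume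
      ≤ ENNReal.ofReal 6 := by
    calc ∫⁻ u in Set.Icc (-1:ℝ) 1, ENNReal.ofReal (|u| ^ (-(2:ℝ)/3)) ∂volume
        ≤ ∫⁻ u in Set.Icc (-1:ℝ) 0 ∪ Set.Icc (0:ℝ) 1,
            ENNReal.ofReal (|u| ^ (-(2:ℝ)/3)) ∂volume := by
          apply lintegral_mono_set
          intro u hu
          rcases le_total u 0 with h | h
          · exact Set.mem_union_left _ ⟨hu.1, h⟩
          · exact Set.mem_union_right _ ⟨h, hu.2⟩
      _ ≤ ∫⁻ u in Set.Icc (-1:ℝ) 0, ENNReal.ofReal (|u| ^ (-(2:ℝ)/3)) ∂volume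
          + ∫⁻ u in Set.Icc (0:ℝ) 1, ENNReal.ofReal (|u| ^ (-(2:ℝ)/3)) ∂volume :=
          lintegral_union_le _ _ _
      _ = ENNReal.ofReal 3 + ENNReal.ofReal 3 := by rw [hIccneg, hIcc01]
      _ = ENNReal.ofReal 6 := by rw [← ENNReal.ofReal_add] <;> norm_num
  have hpdf : ∀ u : ℝ, gaussianPDF 0 ((d:NNReal))⁻¹ u ≤ ENNReal.ofReal (Real.sqrt d) := by
    intro u
    unfold gaussianPDF
    apply ENNReal.ofReal_le_ofReal
    unfold gaussianPDFReal
    rw [NNReal.coe_inv, NNReal.coe_natCast]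
    have hsq : (Real.sqrt d)⁻¹ ≤ Real.sqrt (2 * Real.pi * ((d:ℝ))⁻¹) := by
      have h2pi : (1:ℝ) ≤ 2 * Real.pi := by nlinarith [Real.pi_gt_three]
      have hle : (d:ℝ)⁻¹ ≤ 2 * Real.pi * (d:ℝ)⁻¹ := by
        nlinarith [inv_nonneg.mpr hd0.le]
      calc (Real.sqrt d)⁻¹ = Real.sqrt ((d:ℝ)⁻¹) := by rw [Real.sqrt_inv]
        _ ≤ Real.sqrt (2 * Real.pi * ((d:ℝ))⁻¹) := Real.sqrt_le_sqrt hle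
    have hexp : Real.exp (-(u - 0)^2 / (2 * ((d:ℝ))⁻¹)) ≤ 1 := by
      rw [Real.exp_le_one_iff]
      apply div_nonpos_of_nonpos_of_nonneg
      · nlinarith [sq_nonneg (u - 0)]
      · positivity
    have hsp : 0 < Real.sqrt (2 * Real.pi * ((d:ℝ))⁻¹) := by
      apply Real.sqrt_pos.mpr; positivity
    have hds : 0 < Real.sqrt d := Real.sqrt_pos.mpr hd0
    calc (Real.sqrt (2 * Real.pi * ((d:ℝ))⁻¹))⁻¹ * Real.exp (-(u - 0)^2 / (2 * ((d:ℝ))⁻¹))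
        ≤ (Real.sqrt (2 * Real.pi * ((d:ℝ))⁻¹))⁻¹ * 1 := by
          apply mul_le_mul_of_nonneg_left hexp (by positivity)
      _ = (Real.sqrt (2 * Real.pi * ((d:ℝ))⁻¹))⁻¹ := mul_one _
      _ ≤ Real.sqrt d := by
          rw [← inv_inv (Real.sqrt d)]
          exact inv_anti₀ (by positivity) hsq
  have hIcc : ∫⁻ u in Set.Icc (-1:ℝ) 1,
      (gaussianPDF 0 ((d:NNReal))⁻¹ * fun u => ENNReal.ofReal (|u| ^ (-(2:ℝ)/3))) u ∂volume
        ≤ ENNReal.ofReal (6 * Real.sqrt d) := by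
    calc ∫⁻ u in Set.Icc (-1:ℝ) 1,
        (gaussianPDF 0 ((d:NNReal))⁻¹ * fun u => ENNReal.ofReal (|u| ^ (-(2:ℝ)/3))) u ∂volume
        ≤ ∫⁻ u in Set.Icc (-1:ℝ) 1,
            ENNReal.ofReal (Real.sqrt d) * ENNReal.ofReal (|u| ^ (-(2:ℝ)/3)) ∂volume := by
          apply setLIntegral_mono (measurable_const.mul hφm)
          intro u _
          exact mul_le_mul_left (hpdf u) _
      _ = ENNReal.ofReal (Real.sqrt d)
          * ∫⁻ u in Set.Icc (-1:ℝ) 1, ENNReal.ofReal (|u| ^ (-(2:ℝ)/3)) ∂volume :=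
          lintegral_const_mul _ hφm
      _ ≤ ENNReal.ofReal (Real.sqrt d) * ENNReal.ofReal 6 := mul_le_mul_right hφIcc _
      _ = ENNReal.ofReal (6 * Real.sqrt d) := by
          rw [← ENNReal.ofReal_mul (Real.sqrt_nonneg _), mul_comm]
  calc (∫⁻ u in Set.Icc (-1:ℝ) 1,
      (gaussianPDF 0 ((d:NNReal))⁻¹ * fun u => ENNReal.ofReal (|u| ^ (-(2:ℝ)/3))) u ∂volume)
      + ∫⁻ u in (Set.Icc (-1:ℝ) 1)ᶜ,
        (gaussianPDF 0 ((d:NNReal))⁻¹ * fun u => ENNReal.ofReal (|u| ^ (-(2:ℝ)/3))) u ∂volume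
      ≤ ENNReal.ofReal (6 * Real.sqrt d) + 1 := add_le_add hIcc hcompl
    _ = ENNReal.ofReal (6 * Real.sqrt d + 1) := by
        rw [← ENNReal.ofReal_one, ← ENNReal.ofReal_add (by positivity) (by norm_num)]


lemma lintegral_ite_prop {α : Type*} [MeasurableSpace α] (μ : MeasureTheory.Measure α)
    (p : α → Prop) [DecidablePred p] (hp : MeasurableSet {x | p x}) :
    ∫⁻ x, (if p x then (1:ℝ≥0∞) else 0) ∂μ = μ {x | p x} := by
  rw [← MeasureTheory.lintegral_indicator_one hp]
  apply MeasureTheory.lintegral_congr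
  intro x
  by_cases h : p x
  · simp [h, Set.indicator_apply, Set.mem_setOf_eq]
  · simp [h, Set.indicator_apply, Set.mem_setOf_eq]

section MeasHelpers
variable {α : Type*} [MeasurableSpace α] {m d : ℕ}

lemma measurable_npre_comp {Wf : α → Wt m d} {xf : α → Vec d}
    (hW : Measurable Wf) (hx : Measurable xf) (r : Fin m) :
    Measurable fun ω => npre (Wf ω) (xf ω) r := by
  unfold npre
  apply Finset.measurable_sum
  intro i _
  exact (((measurable_pi_apply ((r,i) : Fin m × Fin d)).comp (WithLp.measurable_ofLp _ _)).comp hW).mul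
    (((measurable_pi_apply i).comp (WithLp.measurable_ofLp _ _)).comp hx)

lemma measurable_net_comp {sf : α → Fin m → ℝ} {Wf : α → Wt m d} {xf : α → Vec d}
    (hs : Measurable sf) (hW : Measurable Wf) (hx : Measurable xf) :
    Measurable fun ω => net (sf ω) (Wf ω) (xf ω) := by
  unfold net
  apply Measurable.const_mul
  apply Finset.measurable_sum
  intro r _
  exact ((measurable_pi_apply r).comp hs).mul
    ((measurable_npre_comp hW hx r).max measurable_const)

lemma measurable_netGrad_comp {sf : α → Fin m → ℝ} {Wf : α → Wt m d} {xf : α → Vec d}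
    (hs : Measurable sf) (hW : Measurable Wf) (hx : Measurable xf) (p : Fin m × Fin d) :
    Measurable fun ω => netGrad (sf ω) (Wf ω) (xf ω) p := by
  unfold netGrad
  simp only [PiLp.toLp_apply]
  apply Measurable.mul
  · exact (measurable_const.mul ((measurable_pi_apply p.1).comp hs))
  · exact Measurable.ite
      (measurableSet_lt measurable_const (measurable_npre_comp hW hx p.1))
      (((measurable_pi_apply p.2).comp (WithLp.measurable_ofLp _ _)).comp hx) measurable_const

lemma measurable_netLin_comp {sf : α → Fin m → ℝ} {W0f Wf : α → Wt m d} {xf : α → Vec d}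
    (hs : Measurable sf) (h0 : Measurable W0f) (hW : Measurable Wf) (hx : Measurable xf) :
    Measurable fun ω => netLin (sf ω) (W0f ω) (Wf ω) (xf ω) := by
  unfold netLin
  apply (measurable_net_comp hs h0 hx).add
  apply Finset.measurable_sum
  intro p _
  exact (measurable_netGrad_comp hs h0 hx p).mul
    ((((measurable_pi_apply p).comp (WithLp.measurable_ofLp _ _)).comp hW).sub (((measurable_pi_apply p).comp (WithLp.measurable_ofLp _ _)).comp h0))

lemma measurable_Trow_comp {W0f Wf : α → Wt m d} (h0 : Measurable W0f) (hW : Measurable Wf)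
    (r : Fin m) : Measurable fun ω => Trow (W0f ω) (Wf ω) r := by
  unfold Trow
  apply Real.continuous_sqrt.measurable.comp
  apply Finset.measurable_sum
  intro i _
  exact ((((measurable_pi_apply ((r,i) : Fin m × Fin d)).comp (WithLp.measurable_ofLp _ _)).comp hW).sub
    (((measurable_pi_apply ((r,i) : Fin m × Fin d)).comp (WithLp.measurable_ofLp _ _)).comp h0)).pow_const 2

end MeasHelpers

end Stmt2Aux


open Stmt2Aux in
set_option maxHeartbeats 1000000 in
/-- Error of local linearization of two-layer ReLU networks (Lemma 1): for `d ≥ 3` and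
under the random initialization of Assumption 1 (signs i.i.d. uniform on `{±1}`,
`W(0)` with i.i.d. `N(0,1/d)` coordinates, all independent; `X` independent of the
initialization, `‖X‖ ≤ 1` a.s. and `P(|vᵀX| ≤ ζ) ≤ cζ`), there is a constant `C`
depending only on `c` and `d` such that for every initialization-measurable `W ∈ S_B`
a.s.: `E_{init,X}|f(X;W) − f̂(X;W)|² ≤ C B³ m^{−1/2}` and
`E_{init,X}‖∇_W f(X;W) − ∇_W f(X;W(0))‖² ≤ C B m^{−1/2}`. -/
theorem stmt_2 :
    ∀ (d : ℕ), 3 ≤ d → ∀ c : ℝ, 0 < c →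
    ∃ C : ℝ, 0 < C ∧
    ∀ (m : ℕ), 0 < m → ∀ B : ℝ, 0 < B →
    ∀ (Ω : Type) [MeasurableSpace Ω] (P : Measure Ω), ∀ _hP : IsProbabilityMeasure P,
    ∀ (W0 : Ω → Wt m d) (ssign : Ω → Fin m → ℝ) (X : Ω → Vec d) (W : Ω → Wt m d),
    Measurable W0 → Measurable ssign → Measurable X →
    (∀ ω r, ssign ω r = 1 ∨ ssign ω r = -1) →
    (∀ r, P {ω | ssign ω r = 1} = 1 / 2) →
    (∀ p : Fin m × Fin d,
      Measure.map (fun ω => W0 ω p) P = gaussianReal 0 ((d : NNReal))⁻¹) →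
    @iIndepFun Ω ((Fin m × Fin d) ⊕ Fin m) _ (fun _ => ℝ)
      (fun _ : (Fin m × Fin d) ⊕ Fin m => (inferInstance : MeasurableSpace ℝ))
      (Sum.elim (fun p ω => W0 ω p) (fun r ω => ssign ω r)) P →
    IndepFun (fun ω => (W0 ω, ssign ω)) X P →
    (∀ᵐ ω ∂P, ‖X ω‖ ≤ 1) →
    (∀ v : Vec d, ‖v‖ = 1 → ∀ ζ : ℝ, 0 < ζ →
      P {ω | |∑ i, v i * X ω i| ≤ ζ} ≤ ENNReal.ofReal (c * ζ)) →
    (@Measurable Ω (Wt m d)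
      (MeasurableSpace.comap (fun ω => (W0 ω, ssign ω)) inferInstance) _ W) →
    (∀ᵐ ω ∂P, ‖W ω - W0 ω‖ ≤ B) →
    (∫ ω, (net (ssign ω) (W ω) (X ω) - netLin (ssign ω) (W0 ω) (W ω) (X ω)) ^ 2 ∂P
        ≤ C * B ^ 3 * (Real.sqrt m)⁻¹)
    ∧ (∫ ω, (∑ p : Fin m × Fin d,
             (netGrad (ssign ω) (W ω) (X ω) p - netGrad (ssign ω) (W0 ω) (X ω) p) ^ 2) ∂P
        ≤ C * B * (Real.sqrt m)⁻¹) := by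
  intro d hd c hc
  have hK1pos : (0:ℝ) < 6 * Real.sqrt d + 1 := by positivity
  set K1 : ℝ := 6 * Real.sqrt d + 1 with hK1def
  set K : ℝ := 3⁻¹ * K1 ^ 3 with hKdef
  have hKpos : 0 < K := by positivity
  refine ⟨c * Real.sqrt K + 1, by positivity, ?_⟩
  intro m hm B hB Ω _ P hP W0 ssign X W hW0m hsm hXm hsval _hshalf hmarg hiind hindep
    hXnorm hanti hWcomap hWB
  have hmpos : (0:ℝ) < m := by exact_mod_cast hm
  have hsmpos : 0 < Real.sqrt m := Real.sqrt_pos.mpr hmpos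
  have hsKpos : 0 < Real.sqrt K := Real.sqrt_pos.mpr hKpos
  have hdn : (d:NNReal) ≠ 0 := Nat.cast_ne_zero.mpr (by omega)
  have hvne : ((d:NNReal))⁻¹ ≠ 0 := by simp [hdn]
  -- measurability of W
  have hWm : Measurable W := hWcomap.mono (hW0m.prodMk hsm).comap_le le_rfl
  -- the counting function G
  set G : Ω → ℝ≥0∞ := fun ω =>
    ∑ r, (if |npre (W0 ω) (X ω) r| ≤ Trow (W0 ω) (W ω) r then (1:ℝ≥0∞) else 0) with hGdef
  have hGm : Measurable G := by
    apply Finset.measurable_sum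
    intro r _
    exact Measurable.ite
      (measurableSet_le (measurable_npre_comp hW0m hXm r).abs (measurable_Trow_comp hW0m hWm r))
      measurable_const measurable_const
  -- Z and independence from X
  set Z : Ω → Wt m d × Wt m d := fun ω => (W0 ω, W ω) with hZdef
  have hZm : Measurable Z := hW0m.prodMk hWm
  have hZX : IndepFun Z X P := by
    have hYY : @Measurable Ω (Wt m d × (Fin m → ℝ))
        (MeasurableSpace.comap (fun ω => (W0 ω, ssign ω)) inferInstance) _
        (fun ω => (W0 ω, ssign ω)) := comap_measurable _
    have hW0Y : @Measurable Ω (Wt m d)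
        (MeasurableSpace.comap (fun ω => (W0 ω, ssign ω)) inferInstance) _ W0 :=
      measurable_fst.comp hYY
    have hZY : @Measurable Ω (Wt m d × Wt m d)
        (MeasurableSpace.comap (fun ω => (W0 ω, ssign ω)) inferInstance) _ Z :=
      Measurable.prodMk hW0Y hWcomap
    have hle : MeasurableSpace.comap Z inferInstance ≤
        MeasurableSpace.comap (fun ω => (W0 ω, ssign ω)) inferInstance :=
      measurable_iff_comap_le.mp hZY
    rw [IndepFun_iff] at hindep ⊢
    intro t1 t2 h1 h2
    exact hindep t1 t2 (hle t1 h1) h2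
  have hprodmap : P.map (fun ω => (Z ω, X ω)) = (P.map Z).prod (P.map X) :=
    (indepFun_iff_map_prod_eq_prod_map_map hZm.aemeasurable hXm.aemeasurable).mp hZX
  haveI hPX : IsProbabilityMeasure (P.map X) := Measure.isProbabilityMeasure_map hXm.aemeasurable
  haveI hPZ : IsProbabilityMeasure (P.map Z) := Measure.isProbabilityMeasure_map hZm.aemeasurable
  -- the function on the product space
  set F : (Wt m d × Wt m d) × Vec d → ℝ≥0∞ := fun q =>
    ∑ r, (if |npre q.1.1 q.2 r| ≤ Trow q.1.1 q.1.2 r then (1:ℝ≥0∞) else 0) with hFdef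
  have hFm : Measurable F := by
    apply Finset.measurable_sum
    intro r _
    exact Measurable.ite
      (measurableSet_le
        ((measurable_npre_comp (measurable_fst.comp measurable_fst) measurable_snd r).abs)
        (measurable_Trow_comp (measurable_fst.comp measurable_fst)
          (measurable_snd.comp measurable_fst) r))
      measurable_const measurable_const
  -- coordinates of W0 are a.s. nonzero
  have hcoordzero : ∀ p : Fin m × Fin d, ∀ᵐ ω ∂P, W0 ω p ≠ 0 := by
    intro p
    have hXp : Measurable fun ω => W0 ω p := ((measurable_pi_apply p).comp (WithLp.measurable_ofLp _ _)).comp hW0m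
    have h0 : P {ω | W0 ω p = 0} = 0 := by
      have heq : P {ω | W0 ω p = 0} = (P.map (fun ω => W0 ω p)) {(0:ℝ)} := by
        rw [Measure.map_apply hXp (measurableSet_singleton 0)]
        rfl
      rw [heq, hmarg p, gaussianReal_of_var_ne_zero _ hvne,
        withDensity_apply _ (measurableSet_singleton _)]
      exact setLIntegral_measure_zero _ _ (by simp)
    rw [ae_iff]
    simpa using h0
  -- Gaussian inverse second moment per row
  have hrowG : ∀ r : Fin m,
      ∫⁻ ω, ENNReal.ofReal ((∑ i, (W0 ω (r,i))^2)⁻¹) ∂P ≤ ENNReal.ofReal K := by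
    intro r
    have hj0 : (0:ℕ) < d := by omega
    have hj1 : (1:ℕ) < d := by omega
    have hj2 : (2:ℕ) < d := by omega
    set j0 : Fin d := ⟨0, hj0⟩ with hj0def
    set j1 : Fin d := ⟨1, hj1⟩ with hj1def
    set j2 : Fin d := ⟨2, hj2⟩ with hj2def
    set φ : ℝ → ℝ≥0∞ := fun u => ENNReal.ofReal (|u| ^ (-(2:ℝ)/3)) with hφdef
    have hφm : Measurable φ := by unfold φ; measurability
    have hevm : ∀ p : Fin m × Fin d, Measurable fun ω => W0 ω p :=
      fun p => ((measurable_pi_apply p).comp (WithLp.measurable_ofLp _ _)).comp hW0m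
    have hg0m : Measurable fun ω => φ (W0 ω (r, j0)) := hφm.comp (hevm _)
    have hg1m : Measurable fun ω => φ (W0 ω (r, j1)) := hφm.comp (hevm _)
    have hg2m : Measurable fun ω => φ (W0 ω (r, j2)) := hφm.comp (hevm _)
    have hfam : ∀ i : (Fin m × Fin d) ⊕ Fin m,
        Measurable (Sum.elim (fun p ω => W0 ω p) (fun q ω => ssign ω q) i) := by
      rintro (p | q)
      · exact ((measurable_pi_apply p).comp (WithLp.measurable_ofLp _ _)).comp hW0m
      · exact (measurable_pi_apply q).comp hsm
    have hne10 : (Sum.inl (r,j1) : (Fin m × Fin d) ⊕ Fin m) ≠ Sum.inl (r,j0) := by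
      simp [hj0def, hj1def, Prod.ext_iff, Fin.ext_iff]
    have hne20 : (Sum.inl (r,j2) : (Fin m × Fin d) ⊕ Fin m) ≠ Sum.inl (r,j0) := by
      simp [hj0def, hj2def, Prod.ext_iff, Fin.ext_iff]
    have hne12 : (Sum.inl (r,j1) : (Fin m × Fin d) ⊕ Fin m) ≠ Sum.inl (r,j2) := by
      simp [hj1def, hj2def, Prod.ext_iff, Fin.ext_iff]
    have hI12 : IndepFun (fun ω => (W0 ω (r,j1), W0 ω (r,j2))) (fun ω => W0 ω (r,j0)) P :=
      hiind.indepFun_prodMk hfam (Sum.inl (r,j1)) (Sum.inl (r,j2)) (Sum.inl (r,j0))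
        hne10 hne20
    have hI0 : IndepFun (fun ω => φ (W0 ω (r,j0)))
        (fun ω => φ (W0 ω (r,j1)) * φ (W0 ω (r,j2))) P :=
      hI12.symm.comp hφm
        ((hφm.comp measurable_fst).mul (hφm.comp measurable_snd))
    have hI12' : IndepFun (fun ω => φ (W0 ω (r,j1))) (fun ω => φ (W0 ω (r,j2))) P :=
      (hiind.indepFun hne12).comp hφm hφm
    have hco : ∀ p : Fin m × Fin d, ∫⁻ ω, φ (W0 ω p) ∂P ≤ ENNReal.ofReal K1 := by
      intro p
      have : ∫⁻ ω, φ (W0 ω p) ∂P = ∫⁻ u, φ u ∂(P.map (fun ω => W0 ω p)) :=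
        (lintegral_map hφm (hevm p)).symm
      rw [this, hmarg p]
      exact gauss_rpow_moment hd
    have hptw : ∀ᵐ ω ∂P, ENNReal.ofReal ((∑ i, (W0 ω (r,i))^2)⁻¹)
        ≤ ENNReal.ofReal 3⁻¹ *
          (φ (W0 ω (r,j0)) * (φ (W0 ω (r,j1)) * φ (W0 ω (r,j2)))) := by
      filter_upwards [hcoordzero (r,j0), hcoordzero (r,j1), hcoordzero (r,j2)]
        with ω h0 h1 h2
      have hsub : (W0 ω (r,j0))^2 + (W0 ω (r,j1))^2 + (W0 ω (r,j2))^2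
          ≤ ∑ i, (W0 ω (r,i))^2 := by
        have hins : ({j0, j1, j2} : Finset (Fin d)) ⊆ Finset.univ := Finset.subset_univ _
        have hj01 : j0 ≠ j1 := by simp [hj0def, hj1def, Fin.ext_iff]
        have hj02 : j0 ≠ j2 := by simp [hj0def, hj2def, Fin.ext_iff]
        have hj12 : j1 ≠ j2 := by simp [hj1def, hj2def, Fin.ext_iff]
        have heq3 : ∑ i ∈ ({j0, j1, j2} : Finset (Fin d)), (W0 ω (r,i))^2
            = (W0 ω (r,j0))^2 + (W0 ω (r,j1))^2 + (W0 ω (r,j2))^2 := by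
          rw [Finset.sum_insert (by simp [hj01, hj02]),
            Finset.sum_insert (by simp [hj12]), Finset.sum_singleton]
          ring
        rw [← heq3]
        exact Finset.sum_le_sum_of_subset_of_nonneg hins (fun i _ _ => sq_nonneg _)
      have hamgm := amgm3 h0 h1 h2 hsub
      calc ENNReal.ofReal ((∑ i, (W0 ω (r,i))^2)⁻¹)
          ≤ ENNReal.ofReal (3⁻¹ * (|W0 ω (r,j0)| ^ (-(2:ℝ)/3) *
              (|W0 ω (r,j1)| ^ (-(2:ℝ)/3) * |W0 ω (r,j2)| ^ (-(2:ℝ)/3)))) :=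
            ENNReal.ofReal_le_ofReal hamgm
        _ = ENNReal.ofReal 3⁻¹ *
            (φ (W0 ω (r,j0)) * (φ (W0 ω (r,j1)) * φ (W0 ω (r,j2)))) := by
            rw [ENNReal.ofReal_mul (by norm_num), ENNReal.ofReal_mul (by positivity),
              ENNReal.ofReal_mul (by positivity)]
    calc ∫⁻ ω, ENNReal.ofReal ((∑ i, (W0 ω (r,i))^2)⁻¹) ∂P
        ≤ ∫⁻ ω, ENNReal.ofReal 3⁻¹ *
            (φ (W0 ω (r,j0)) * (φ (W0 ω (r,j1)) * φ (W0 ω (r,j2)))) ∂P :=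
          lintegral_mono_ae hptw
      _ = ENNReal.ofReal 3⁻¹ *
          ∫⁻ ω, φ (W0 ω (r,j0)) * (φ (W0 ω (r,j1)) * φ (W0 ω (r,j2))) ∂P :=
          lintegral_const_mul _ (hg0m.mul (hg1m.mul hg2m))
      _ = ENNReal.ofReal 3⁻¹ * ((∫⁻ ω, φ (W0 ω (r,j0)) ∂P) *
          ∫⁻ ω, φ (W0 ω (r,j1)) * φ (W0 ω (r,j2)) ∂P) := by
          congr 1
          exact lintegral_mul_eq_lintegral_mul_lintegral_of_indepFun''
            hg0m.aemeasurable (hg1m.mul hg2m).aemeasurable hI0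
      _ = ENNReal.ofReal 3⁻¹ * ((∫⁻ ω, φ (W0 ω (r,j0)) ∂P) *
          ((∫⁻ ω, φ (W0 ω (r,j1)) ∂P) * ∫⁻ ω, φ (W0 ω (r,j2)) ∂P)) := by
          congr 2
          exact lintegral_mul_eq_lintegral_mul_lintegral_of_indepFun''
            hg1m.aemeasurable hg2m.aemeasurable hI12'
      _ ≤ ENNReal.ofReal 3⁻¹ *
          (ENNReal.ofReal K1 * (ENNReal.ofReal K1 * ENNReal.ofReal K1)) :=
          mul_le_mul_right (mul_le_mul' (hco _) (mul_le_mul' (hco _) (hco _))) _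
      _ = ENNReal.ofReal K := by
          rw [← ENNReal.ofReal_mul (by positivity), ← ENNReal.ofReal_mul (by positivity),
            ← ENNReal.ofReal_mul (by norm_num)]
          congr 1
          rw [hKdef]; ring
  -- the core bound
  have hcore : ∫⁻ ω, G ω ∂P
      ≤ ENNReal.ofReal (c * B * (Real.sqrt m * Real.sqrt K)) := by
    set lam : ℝ := B / (Real.sqrt m * Real.sqrt K) with hlamdef
    have hlampos : 0 < lam := by positivity
    have hj0 : (0:ℕ) < d := by omega
    set j0 : Fin d := ⟨0, hj0⟩ with hj0def
    have hstep1 : ∫⁻ ω, G ω ∂P = ∫⁻ z, (∫⁻ x, F (z, x) ∂(P.map X)) ∂(P.map Z) := by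
      calc ∫⁻ ω, G ω ∂P = ∫⁻ ω, F (Z ω, X ω) ∂P := rfl
        _ = ∫⁻ q, F q ∂(P.map fun ω => (Z ω, X ω)) :=
            (lintegral_map hFm (hZm.prodMk hXm)).symm
        _ = ∫⁻ q, F q ∂((P.map Z).prod (P.map X)) := by rw [hprodmap]
        _ = _ := lintegral_prod F hFm.aemeasurable
    rw [hstep1]
    -- a.e. properties of Z under the pushforward
    have haeA : ∀ᵐ z ∂(P.map Z), ∀ r : Fin m, (z.1 (r, j0)) ≠ 0 := by
      have hS : MeasurableSet {z : Wt m d × Wt m d | ∀ r : Fin m, z.1 (r, j0) ≠ 0} := by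
        have : {z : Wt m d × Wt m d | ∀ r : Fin m, z.1 (r, j0) ≠ 0}
            = ⋂ r : Fin m, (fun z : Wt m d × Wt m d => z.1 (r, j0)) ⁻¹' ({0}ᶜ) := by
          ext z; simp
        rw [this]
        exact MeasurableSet.iInter fun r =>
          (((measurable_pi_apply _).comp (WithLp.measurable_ofLp _ _)).comp measurable_fst) (measurableSet_singleton 0).compl
      rw [MeasureTheory.ae_map_iff hZm.aemeasurable hS]
      rw [MeasureTheory.ae_all_iff]
      exact fun r => hcoordzero (r, j0)
    have haeB : ∀ᵐ z ∂(P.map Z), ∑ r, (Trow z.1 z.2 r)^2 ≤ B^2 := by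
      have hS : MeasurableSet {z : Wt m d × Wt m d | ∑ r, (Trow z.1 z.2 r)^2 ≤ B^2} :=
        measurableSet_le
          (Finset.measurable_sum _ fun r _ =>
            (measurable_Trow_comp measurable_fst measurable_snd r).pow_const 2)
          measurable_const
      rw [MeasureTheory.ae_map_iff hZm.aemeasurable hS]
      filter_upwards [hWB] with ω hω
      show ∑ r, (Trow (W0 ω) (W ω) r)^2 ≤ B^2
      rw [sum_Trow_sq]
      have := norm_nonneg (W ω - W0 ω)
      nlinarith
    have hinner : ∀ᵐ z ∂(P.map Z), (∫⁻ x, F (z, x) ∂(P.map X))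
        ≤ ENNReal.ofReal (c * (B^2 / (2*lam))) + ENNReal.ofReal (c * (lam/2)) *
            ENNReal.ofReal (∑ r, (∑ i, (z.1 (r,i))^2)⁻¹) := by
      filter_upwards [haeA, haeB] with z hz1 hz2
      have hSpos : ∀ r : Fin m, 0 < ∑ i, (z.1 (r,i))^2 := by
        intro r
        have h1 : (z.1 (r,j0))^2 ≤ ∑ i, (z.1 (r,i))^2 :=
          Finset.single_le_sum (f := fun i => (z.1 (r,i))^2)
            (fun i _ => sq_nonneg _) (Finset.mem_univ j0)
        have h2 : 0 < (z.1 (r,j0))^2 := by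
          nlinarith [abs_pos.mpr (hz1 r), sq_abs (z.1 (r,j0))]
        linarith
      have hper : ∀ r : Fin m,
          (∫⁻ x, (if |npre z.1 x r| ≤ Trow z.1 z.2 r then (1:ℝ≥0∞) else 0) ∂(P.map X))
            ≤ ENNReal.ofReal (c * (Trow z.1 z.2 r / Real.sqrt (∑ i, (z.1 (r,i))^2))) := by
        intro r
        have hNpos : 0 < Real.sqrt (∑ i, (z.1 (r,i))^2) := Real.sqrt_pos.mpr (hSpos r)
        set N : ℝ := Real.sqrt (∑ i, (z.1 (r,i))^2) with hNdef
        set v : Vec d := WithLp.toLp 2 (fun i => z.1 (r,i) / N : Fin d → ℝ) with hvdef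
        have hvnorm : ‖v‖ = 1 := by
          rw [EuclideanSpace.norm_eq]
          have : ∑ i, ‖v i‖^2 = 1 := by
            have hNsq : N^2 = ∑ i, (z.1 (r,i))^2 := Real.sq_sqrt (hSpos r).le
            have : ∑ i, ‖v i‖^2 = (∑ i, (z.1 (r,i))^2) / N^2 := by
              rw [Finset.sum_div]
              apply Finset.sum_congr rfl
              intro i _
              rw [hvdef]
              simp only [PiLp.toLp_apply, Real.norm_eq_abs, sq_abs]
              rw [div_pow]
            rw [this, hNsq]
            exact div_self (ne_of_gt (hSpos r))
          rw [this, Real.sqrt_one]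
        have hsetmeas : MeasurableSet {x : Vec d | |npre z.1 x r| ≤ Trow z.1 z.2 r} :=
          measurableSet_le (measurable_npre_comp measurable_const measurable_id r).abs
            measurable_const
        have hind : (∫⁻ x, (if |npre z.1 x r| ≤ Trow z.1 z.2 r then (1:ℝ≥0∞) else 0)
            ∂(P.map X)) = (P.map X) {x : Vec d | |npre z.1 x r| ≤ Trow z.1 z.2 r} :=
          lintegral_ite_prop (P.map X) (fun x => |npre z.1 x r| ≤ Trow z.1 z.2 r) hsetmeas
        have hmapset : ∀ S : Set (Vec d), MeasurableSet S → (P.map X) S = P (X ⁻¹' S) :=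
          fun S hS => Measure.map_apply hXm hS
        have hsplit : ∀ x : Vec d, ∑ i, v i * x i = (npre z.1 x r) / N := by
          intro x
          rw [npre, Finset.sum_div]
          apply Finset.sum_congr rfl
          intro i _
          rw [hvdef]
          simp only [PiLp.toLp_apply]
          rw [div_mul_eq_mul_div]
        rw [hind]
        rcases eq_or_lt_of_le (Trow_nonneg z.1 z.2 r) with h0 | hpos
        · -- Trow = 0
          have hzero : (P.map X) {x : Vec d | |npre z.1 x r| ≤ Trow z.1 z.2 r} = 0 := by
            apply meas_null _ _ hc
            intro ζ hζ
            calc (P.map X) {x : Vec d | |npre z.1 x r| ≤ Trow z.1 z.2 r}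
                ≤ (P.map X) {x : Vec d | |∑ i, v i * x i| ≤ ζ} := by
                  apply measure_mono
                  intro x hx
                  simp only [Set.mem_setOf_eq] at hx ⊢
                  rw [hsplit x, abs_div, abs_of_pos hNpos]
                  have hnum : |npre z.1 x r| = 0 := by
                    have h1 : |npre z.1 x r| ≤ 0 := by rw [← h0] at hx; exact hx
                    exact le_antisymm h1 (abs_nonneg _)
                  rw [hnum, zero_div]
                  exact hζ.le
              _ = P {ω | |∑ i, v i * X ω i| ≤ ζ} := by
                  rw [hmapset {x : Vec d | |∑ i, v i * x i| ≤ ζ} (measurableSet_le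
                    (Finset.measurable_sum _ fun i _ =>
                      (measurable_const.mul ((measurable_pi_apply i).comp (WithLp.measurable_ofLp _ _)))).abs measurable_const)]
                  rfl
              _ ≤ ENNReal.ofReal (c * ζ) := hanti v hvnorm ζ hζ
          rw [hzero]
          exact zero_le
        · -- Trow > 0
          have hζpos : 0 < Trow z.1 z.2 r / N := by positivity
          have hseteq : {x : Vec d | |npre z.1 x r| ≤ Trow z.1 z.2 r}
              = {x : Vec d | |∑ i, v i * x i| ≤ Trow z.1 z.2 r / N} := by
            ext x
            simp only [Set.mem_setOf_eq]
            rw [hsplit x, abs_div, abs_of_pos hNpos]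
            exact (div_le_div_iff_of_pos_right hNpos).symm
          rw [hseteq]
          calc (P.map X) {x : Vec d | |∑ i, v i * x i| ≤ Trow z.1 z.2 r / N}
              = P {ω | |∑ i, v i * X ω i| ≤ Trow z.1 z.2 r / N} := by
                rw [hmapset {x : Vec d | |∑ i, v i * x i| ≤ Trow z.1 z.2 r / N} (measurableSet_le
                  (Finset.measurable_sum _ fun i _ =>
                    (measurable_const.mul ((measurable_pi_apply i).comp (WithLp.measurable_ofLp _ _)))).abs measurable_const)]
                rfl
            _ ≤ ENNReal.ofReal (c * (Trow z.1 z.2 r / N)) := hanti v hvnorm _ hζpos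
      -- combine over r
      have hreal : ∑ r, c * (Trow z.1 z.2 r / Real.sqrt (∑ i, (z.1 (r,i))^2))
          ≤ c * (B^2 / (2*lam)) + c * (lam/2) * ∑ r, (∑ i, (z.1 (r,i))^2)⁻¹ := by
        have hterm : ∀ r : Fin m, Trow z.1 z.2 r / Real.sqrt (∑ i, (z.1 (r,i))^2)
            ≤ (Trow z.1 z.2 r)^2 / (2*lam) + (lam/2) * (∑ i, (z.1 (r,i))^2)⁻¹ := by
          intro r
          have hS := hSpos r
          have hN : 0 < Real.sqrt (∑ i, (z.1 (r,i))^2) := Real.sqrt_pos.mpr hS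
          have hNsq : (Real.sqrt (∑ i, (z.1 (r,i))^2))^2 = ∑ i, (z.1 (r,i))^2 :=
            Real.sq_sqrt hS.le
          have hT := Trow_nonneg z.1 z.2 r
          have hkey : 2 * lam * (Trow z.1 z.2 r / Real.sqrt (∑ i, (z.1 (r,i))^2))
              ≤ (Trow z.1 z.2 r)^2 + lam^2 * (∑ i, (z.1 (r,i))^2)⁻¹ := by
            have hsq := sq_nonneg (Trow z.1 z.2 r - lam / Real.sqrt (∑ i, (z.1 (r,i))^2))
            have hinv : (∑ i, (z.1 (r,i))^2)⁻¹
                = (Real.sqrt (∑ i, (z.1 (r,i))^2))⁻¹^2 := by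
              rw [inv_pow, hNsq]
            rw [hinv]
            have hdiv : Trow z.1 z.2 r / Real.sqrt (∑ i, (z.1 (r,i))^2)
                = Trow z.1 z.2 r * (Real.sqrt (∑ i, (z.1 (r,i))^2))⁻¹ := div_eq_mul_inv _ _
            rw [hdiv]
            nlinarith [sq_nonneg (Trow z.1 z.2 r - lam * (Real.sqrt (∑ i, (z.1 (r,i))^2))⁻¹)]
          calc Trow z.1 z.2 r / Real.sqrt (∑ i, (z.1 (r,i))^2)
              = (2 * lam * (Trow z.1 z.2 r / Real.sqrt (∑ i, (z.1 (r,i))^2))) / (2*lam) := by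
                field_simp
            _ ≤ ((Trow z.1 z.2 r)^2 + lam^2 * (∑ i, (z.1 (r,i))^2)⁻¹) / (2*lam) :=
                (div_le_div_iff_of_pos_right (by positivity)).mpr hkey
            _ = (Trow z.1 z.2 r)^2 / (2*lam) + (lam/2) * (∑ i, (z.1 (r,i))^2)⁻¹ := by
                field_simp
        calc ∑ r, c * (Trow z.1 z.2 r / Real.sqrt (∑ i, (z.1 (r,i))^2))
            ≤ ∑ r, c * ((Trow z.1 z.2 r)^2 / (2*lam) + (lam/2) * (∑ i, (z.1 (r,i))^2)⁻¹) := by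
              apply Finset.sum_le_sum
              intro r _
              exact mul_le_mul_of_nonneg_left (hterm r) hc.le
          _ = c * ((∑ r, (Trow z.1 z.2 r)^2) / (2*lam))
              + c * (lam/2) * ∑ r, (∑ i, (z.1 (r,i))^2)⁻¹ := by
              rw [← Finset.mul_sum, Finset.sum_add_distrib, ← Finset.sum_div, ← Finset.mul_sum]
              ring
          _ ≤ c * (B^2 / (2*lam)) + c * (lam/2) * ∑ r, (∑ i, (z.1 (r,i))^2)⁻¹ := by
              have : (∑ r, (Trow z.1 z.2 r)^2) / (2*lam) ≤ B^2 / (2*lam) :=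
                (div_le_div_iff_of_pos_right (by positivity)).mpr hz2
              nlinarith [this, hc.le]
      calc ∫⁻ x, F (z, x) ∂(P.map X)
          = ∑ r, ∫⁻ x, (if |npre z.1 x r| ≤ Trow z.1 z.2 r then (1:ℝ≥0∞) else 0)
              ∂(P.map X) := by
            show (∫⁻ x, ∑ r, (if |npre z.1 x r| ≤ Trow z.1 z.2 r then (1:ℝ≥0∞) else 0)
              ∂(P.map X)) = _
            exact lintegral_finset_sum _ fun r _ => Measurable.ite
              (measurableSet_le (measurable_npre_comp measurable_const measurable_id r).abs
                measurable_const) measurable_const measurable_const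
        _ ≤ ∑ r, ENNReal.ofReal (c * (Trow z.1 z.2 r / Real.sqrt (∑ i, (z.1 (r,i))^2))) :=
            Finset.sum_le_sum fun r _ => hper r
        _ = ENNReal.ofReal (∑ r, c * (Trow z.1 z.2 r / Real.sqrt (∑ i, (z.1 (r,i))^2))) :=
            (ENNReal.ofReal_sum_of_nonneg (fun r _ => by
              have := Trow_nonneg z.1 z.2 r; positivity)).symm
        _ ≤ ENNReal.ofReal (c * (B^2 / (2*lam)) + c * (lam/2) * ∑ r, (∑ i, (z.1 (r,i))^2)⁻¹) :=
            ENNReal.ofReal_le_ofReal hreal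
        _ = ENNReal.ofReal (c * (B^2 / (2*lam))) + ENNReal.ofReal (c * (lam/2)) *
            ENNReal.ofReal (∑ r, (∑ i, (z.1 (r,i))^2)⁻¹) := by
            rw [ENNReal.ofReal_add (by positivity) (by positivity),
              ENNReal.ofReal_mul (show (0:ℝ) ≤ c * (lam/2) by positivity)]
    -- integrate the inner bound
    have hinvm : Measurable fun z : Wt m d × Wt m d =>
        ENNReal.ofReal (∑ r, (∑ i, (z.1 (r,i))^2)⁻¹) := by
      apply Measurable.ennreal_ofReal
      apply Finset.measurable_sum
      intro r _
      apply Measurable.inv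
      apply Finset.measurable_sum
      intro i _
      exact (((measurable_pi_apply _).comp (WithLp.measurable_ofLp _ _)).comp measurable_fst).pow_const 2
    calc ∫⁻ z, (∫⁻ x, F (z, x) ∂(P.map X)) ∂(P.map Z)
        ≤ ∫⁻ z, (ENNReal.ofReal (c * (B^2 / (2*lam))) + ENNReal.ofReal (c * (lam/2)) *
            ENNReal.ofReal (∑ r, (∑ i, (z.1 (r,i))^2)⁻¹)) ∂(P.map Z) :=
          lintegral_mono_ae hinner
      _ = ENNReal.ofReal (c * (B^2 / (2*lam))) + ENNReal.ofReal (c * (lam/2)) *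
          ∫⁻ z, ENNReal.ofReal (∑ r, (∑ i, (z.1 (r,i))^2)⁻¹) ∂(P.map Z) := by
          rw [lintegral_add_left measurable_const, lintegral_const, measure_univ, mul_one,
            lintegral_const_mul _ hinvm]
      _ ≤ ENNReal.ofReal (c * (B^2 / (2*lam))) + ENNReal.ofReal (c * (lam/2)) *
          ((m : ℝ≥0∞) * ENNReal.ofReal K) := by
          apply add_le_add_right
          apply mul_le_mul_right
          have hpull : ∫⁻ z, ENNReal.ofReal (∑ r, (∑ i, (z.1 (r,i))^2)⁻¹) ∂(P.map Z)
              = ∫⁻ ω, ENNReal.ofReal (∑ r, (∑ i, (W0 ω (r,i))^2)⁻¹) ∂P :=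
            lintegral_map hinvm hZm
          rw [hpull]
          have hsplitsum : ∀ ω : Ω, ENNReal.ofReal (∑ r, (∑ i, (W0 ω (r,i))^2)⁻¹)
              = ∑ r, ENNReal.ofReal ((∑ i, (W0 ω (r,i))^2)⁻¹) := fun ω =>
            ENNReal.ofReal_sum_of_nonneg fun r _ => by positivity
          calc ∫⁻ ω, ENNReal.ofReal (∑ r, (∑ i, (W0 ω (r,i))^2)⁻¹) ∂P
              = ∑ r, ∫⁻ ω, ENNReal.ofReal ((∑ i, (W0 ω (r,i))^2)⁻¹) ∂P := by
                simp_rw [hsplitsum]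
                exact lintegral_finset_sum _ fun r _ => Measurable.ennreal_ofReal <|
                  Measurable.inv <| Finset.measurable_sum _ fun i _ =>
                    (((measurable_pi_apply _).comp (WithLp.measurable_ofLp _ _)).comp hW0m).pow_const 2
            _ ≤ ∑ _r : Fin m, ENNReal.ofReal K := Finset.sum_le_sum fun r _ => hrowG r
            _ = (m : ℝ≥0∞) * ENNReal.ofReal K := by
                rw [Finset.sum_const, Finset.card_univ, Fintype.card_fin, nsmul_eq_mul]
      _ = ENNReal.ofReal (c * B * (Real.sqrt m * Real.sqrt K)) := by
          rw [show ((m : ℕ) : ℝ≥0∞) = ENNReal.ofReal (m : ℝ) by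
            rw [ENNReal.ofReal_natCast]]
          rw [← ENNReal.ofReal_mul (by positivity), ← ENNReal.ofReal_mul (by positivity),
            ← ENNReal.ofReal_add (by positivity) (by positivity)]
          congr 1
          have hmeq : (m:ℝ) = Real.sqrt m * Real.sqrt m := (Real.mul_self_sqrt hmpos.le).symm
          have hKeq : K = Real.sqrt K * Real.sqrt K := (Real.mul_self_sqrt hKpos.le).symm
          set sm := Real.sqrt (m:ℝ) with hsmdef
          set sK := Real.sqrt K with hsKdef2
          have hsm0 : sm ≠ 0 := ne_of_gt hsmpos
          have hsK0 : sK ≠ 0 := ne_of_gt hsKpos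
          have hB0 : B ≠ 0 := ne_of_gt hB
          rw [hlamdef]
          rw [show (m:ℝ) = sm * sm from (Real.mul_self_sqrt hmpos.le).symm,
            show K = sK * sK from (Real.mul_self_sqrt hKpos.le).symm]
          field_simp
          ring
  -- conversion between real chi sums and G
  have hsum_chiG : ∀ ω : Ω, ENNReal.ofReal (∑ r, chiR (W0 ω) (W ω) (X ω) r) = G ω := by
    intro ω
    rw [ENNReal.ofReal_sum_of_nonneg fun r _ => chiR_nonneg _ _ _ _]
    apply Finset.sum_congr rfl
    intro r _
    unfold chiR
    split_ifs <;> simp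
  constructor
  · -- first bound
    have hfm : Measurable fun ω =>
        (net (ssign ω) (W ω) (X ω) - netLin (ssign ω) (W0 ω) (W ω) (X ω))^2 :=
      ((measurable_net_comp hsm hWm hXm).sub
        (measurable_netLin_comp hsm hW0m hWm hXm)).pow_const 2
    rw [integral_eq_lintegral_of_nonneg_ae (ae_of_all _ fun ω => sq_nonneg _)
      hfm.aestronglyMeasurable]
    apply ENNReal.toReal_le_of_le_ofReal (by positivity)
    calc ∫⁻ ω, ENNReal.ofReal ((net (ssign ω) (W ω) (X ω) - netLin (ssign ω) (W0 ω) (W ω) (X ω))^2) ∂P ≤ ∫⁻ ω, ENNReal.ofReal ((m:ℝ)⁻¹ * B^2) * G ω ∂P := by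
          apply lintegral_mono_ae
          filter_upwards [hXnorm, hWB] with ω h1 h2
          calc ENNReal.ofReal ((net (ssign ω) (W ω) (X ω) - netLin (ssign ω) (W0 ω) (W ω) (X ω))^2) ≤ ENNReal.ofReal ((m:ℝ)⁻¹ * B^2 * ∑ r, chiR (W0 ω) (W ω) (X ω) r) := ENNReal.ofReal_le_ofReal (key1 (hsval ω) _ _ h1 hB.le h2)
            _ = ENNReal.ofReal ((m:ℝ)⁻¹ * B^2) * G ω := by
                rw [ENNReal.ofReal_mul (by positivity), hsum_chiG ω]
      _ = ENNReal.ofReal ((m:ℝ)⁻¹ * B^2) * ∫⁻ ω, G ω ∂P := lintegral_const_mul _ hGm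
      _ ≤ ENNReal.ofReal ((m:ℝ)⁻¹ * B^2) *
          ENNReal.ofReal (c * B * (Real.sqrt m * Real.sqrt K)) := mul_le_mul_right hcore _
      _ ≤ ENNReal.ofReal ((c * Real.sqrt K + 1) * B^3 * (Real.sqrt m)⁻¹) := by
          rw [← ENNReal.ofReal_mul (by positivity)]
          apply ENNReal.ofReal_le_ofReal
          have hmeq : (m:ℝ) = Real.sqrt m * Real.sqrt m := (Real.mul_self_sqrt hmpos.le).symm
          have heq : (m:ℝ)⁻¹ * B^2 * (c * B * (Real.sqrt m * Real.sqrt K))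
              = c * Real.sqrt K * B^3 * (Real.sqrt m)⁻¹ := by
            field_simp
            linear_combination -hmeq
          rw [heq]
          have hpos : (0:ℝ) ≤ B^3 * (Real.sqrt m)⁻¹ := by positivity
          nlinarith [hpos]
  · -- second bound
    have hfm : Measurable fun ω => ∑ p : Fin m × Fin d,
        (netGrad (ssign ω) (W ω) (X ω) p - netGrad (ssign ω) (W0 ω) (X ω) p)^2 :=
      Finset.measurable_sum _ fun p _ =>
        ((measurable_netGrad_comp hsm hWm hXm p).sub
          (measurable_netGrad_comp hsm hW0m hXm p)).pow_const 2
    rw [integral_eq_lintegral_of_nonneg_ae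
      (ae_of_all _ fun ω => Finset.sum_nonneg fun p _ => sq_nonneg _)
      hfm.aestronglyMeasurable]
    apply ENNReal.toReal_le_of_le_ofReal (by positivity)
    calc ∫⁻ ω, ENNReal.ofReal (∑ p : Fin m × Fin d, (netGrad (ssign ω) (W ω) (X ω) p - netGrad (ssign ω) (W0 ω) (X ω) p)^2) ∂P ≤ ∫⁻ ω, ENNReal.ofReal ((m:ℝ)⁻¹) * G ω ∂P := by
          apply lintegral_mono_ae
          filter_upwards [hXnorm] with ω h1
          calc ENNReal.ofReal (∑ p : Fin m × Fin d, (netGrad (ssign ω) (W ω) (X ω) p - netGrad (ssign ω) (W0 ω) (X ω) p)^2) ≤ ENNReal.ofReal ((m:ℝ)⁻¹ * ∑ r, chiR (W0 ω) (W ω) (X ω) r) := ENNReal.ofReal_le_ofReal (key2 (hsval ω) _ _ h1)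
            _ = ENNReal.ofReal ((m:ℝ)⁻¹) * G ω := by
                rw [ENNReal.ofReal_mul (by positivity), hsum_chiG ω]
      _ = ENNReal.ofReal ((m:ℝ)⁻¹) * ∫⁻ ω, G ω ∂P := lintegral_const_mul _ hGm
      _ ≤ ENNReal.ofReal ((m:ℝ)⁻¹) *
          ENNReal.ofReal (c * B * (Real.sqrt m * Real.sqrt K)) := mul_le_mul_right hcore _
      _ ≤ ENNReal.ofReal ((c * Real.sqrt K + 1) * B * (Real.sqrt m)⁻¹) := by
          rw [← ENNReal.ofReal_mul (by positivity)]
          apply ENNReal.ofReal_le_ofReal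
          have hmeq : (m:ℝ) = Real.sqrt m * Real.sqrt m := (Real.mul_self_sqrt hmpos.le).symm
          have heq : (m:ℝ)⁻¹ * (c * B * (Real.sqrt m * Real.sqrt K))
              = c * Real.sqrt K * B * (Real.sqrt m)⁻¹ := by
            field_simp
            linear_combination -hmeq
          rw [heq]
          have hpos : (0:ℝ) ≤ B * (Real.sqrt m)⁻¹ := by positivity
          nlinarith [hpos]
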